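/- arXiv:1503.07826 — 6 statements merged into one kernel-verified Lean document; each statement's English description precedes it below -/
import Mathlib

section
/- Sklar's theorem (existence): Let N be a positive integer and let μ be a probability measure on ℝ^N with joint CDF F(x) = μ{y : y_i ≤ x_i for all i} and with marginal CDFs F_1, …, F_N (the CDFs of the pushforwards of μ under the coordinate projections), each of which is continuous. Then there exists a copula measure ν on [0,1]^N such that for every x ∈ ℝ^N, F(x) = ν{u : u_i ≤ F_i(x_i) for all i}. -/
open MeasureTheory ProbabilityTheory Set Filter Topology

section Aux

variable (m : Measure ℝ) [IsProbabilityMeasure m]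

/-- Upper bound on the measure of a sublevel set of the cdf. -/
lemma cdf_level_le (hF : Continuous (cdf m)) (s : ℝ) :
    m {t | cdf m t ≤ s} ≤ ENNReal.ofReal s := by
  set S := {t | cdf m t ≤ s} with hS
  have hSc : IsClosed S := isClosed_Iic.preimage hF
  by_cases hne : S.Nonempty
  · by_cases hbdd : BddAbove S
    · have hmem : sSup S ∈ S := hSc.csSup_mem hne hbdd
      have hsub : S ⊆ Iic (sSup S) := fun t ht => le_csSup hbdd ht
      calc m S ≤ m (Iic (sSup S)) := measure_mono hsub
        _ = ENNReal.ofReal (cdf m (sSup S)) := (ofReal_cdf m _).symm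
        _ ≤ ENNReal.ofReal s := ENNReal.ofReal_le_ofReal hmem
    · have hle : ∀ t : ℝ, cdf m t ≤ s := by
        intro t
        obtain ⟨u, huS, htu⟩ : ∃ u ∈ S, t < u := by
          by_contra h
          push_neg at h
          exact hbdd ⟨t, fun u hu => le_of_not_gt fun hlt => absurd hu (by
            intro huS; exact absurd (h u huS) (not_le.mpr hlt))⟩
        exact le_trans (monotone_cdf m htu.le) huS
      have h1s : (1 : ℝ) ≤ s :=
        le_of_tendsto (tendsto_cdf_atTop m) (Eventually.of_forall hle)
      calc m S ≤ m univ := measure_mono (subset_univ _)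
        _ = 1 := measure_univ
        _ ≤ ENNReal.ofReal s := by
            rw [← ENNReal.ofReal_one]
            exact ENNReal.ofReal_le_ofReal h1s
  · rw [not_nonempty_iff_eq_empty.mp hne]
    simp

/-- Lower bound on the measure of a sublevel set of the cdf, for levels in `[0,1)`. -/
lemma cdf_level_ge (hF : Continuous (cdf m)) {s : ℝ} (h0 : 0 ≤ s) (h1 : s < 1) :
    ENNReal.ofReal s ≤ m {t | cdf m t ≤ s} := by
  rcases eq_or_lt_of_le h0 with h0 | h0
  · simp [← h0]
  obtain ⟨a, ha⟩ : ∃ a, cdf m a = s := by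
    obtain ⟨a₀, ha₀⟩ := ((tendsto_cdf_atBot m).eventually_lt_const h0).exists
    obtain ⟨a₁, ha₁⟩ := ((tendsto_cdf_atTop m).eventually_const_lt h1).exists
    have hle : a₀ ≤ a₁ := by
      by_contra h
      exact absurd (monotone_cdf m (le_of_not_ge h)) (not_le.mpr (ha₀.trans ha₁))
    obtain ⟨a, _, ha⟩ := intermediate_value_Icc hle hF.continuousOn
      (mem_Icc.mpr ⟨ha₀.le, ha₁.le⟩)
    exact ⟨a, ha⟩
  calc ENNReal.ofReal s = ENNReal.ofReal (cdf m a) := by rw [ha]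
    _ = m (Iic a) := ofReal_cdf m a
    _ ≤ m {t | cdf m t ≤ s} :=
        measure_mono fun t ht => le_of_le_of_eq (monotone_cdf m ht) ha

/-- Probability integral transform: pushing a probability measure forward through its own
continuous cdf gives the uniform distribution on `[0,1]`. -/
lemma map_cdf (hF : Continuous (cdf m)) :
    m.map (cdf m) = volume.restrict (Icc (0 : ℝ) 1) := by
  haveI : IsProbabilityMeasure (m.map (cdf m)) :=
    Measure.isProbabilityMeasure_map hF.measurable.aemeasurable
  refine Measure.ext_of_Iic _ _ fun a => ?_
  rw [Measure.map_apply hF.measurable measurableSet_Iic,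
    Measure.restrict_apply measurableSet_Iic]
  have hIcc : Iic a ∩ Icc (0 : ℝ) 1 = Icc 0 (min a 1) := by
    ext t
    simp only [mem_inter_iff, mem_Iic, mem_Icc, le_min_iff]
    tauto
  rw [hIcc, Real.volume_Icc]
  have hpre : cdf m ⁻¹' Iic a = {t | cdf m t ≤ a} := rfl
  rw [hpre]
  rcases lt_or_ge a 0 with ha | ha
  · have he : {t | cdf m t ≤ a} = ∅ :=
      eq_empty_of_forall_notMem fun t ht => absurd (le_trans (cdf_nonneg m t) ht) (not_le.mpr ha)
    rw [he, measure_empty]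
    symm
    rw [ENNReal.ofReal_eq_zero]
    have hmin := min_le_left a 1
    linarith
  rcases lt_or_ge a 1 with ha1 | ha1
  · rw [min_eq_left ha1.le, sub_zero]
    exact le_antisymm (cdf_level_le m hF a) (cdf_level_ge m hF ha ha1)
  · have he : {t | cdf m t ≤ a} = univ :=
      eq_univ_of_forall fun t => le_trans (cdf_le_one m t) ha1
    rw [he, measure_univ, min_eq_right ha1, sub_zero, ENNReal.ofReal_one]

/-- The "flat part" of a continuous cdf to the right of a point has measure zero. -/
lemma cdf_flat_null (hF : Continuous (cdf m)) (c : ℝ) :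
    m {t | c < t ∧ cdf m t ≤ cdf m c} = 0 := by
  set E := {t | c < t ∧ cdf m t ≤ cdf m c} with hE
  have hEm : MeasurableSet E :=
    (measurableSet_Ioi).inter ((isClosed_Iic.preimage hF).measurableSet)
  have hd : Disjoint (Iic c) E := by
    rw [disjoint_left]
    rintro t ht ⟨h1, _⟩
    exact absurd ht (not_le.mpr h1)
  have hsub : Iic c ∪ E ⊆ {t | cdf m t ≤ cdf m c} := by
    rintro t (ht | ⟨_, ht⟩)
    · exact monotone_cdf m ht
    · exact ht
  have key : m (Iic c) + m E ≤ m (Iic c) := by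
    calc m (Iic c) + m E = m (Iic c ∪ E) := (measure_union hd hEm).symm
      _ ≤ m {t | cdf m t ≤ cdf m c} := measure_mono hsub
      _ ≤ ENNReal.ofReal (cdf m c) := cdf_level_le m hF _
      _ = m (Iic c) := ofReal_cdf m c
  have := ENNReal.le_of_add_le_add_left (measure_ne_top m (Iic c))
    (by rw [add_zero]; exact key : m (Iic c) + m E ≤ m (Iic c) + 0)
  exact le_antisymm this zero_le

end Aux

/-- A copula measure on `[0,1]^N`: a probability measure on `ℝ^N` concentrated on the unit
cube whose one-dimensional marginals are all uniform on `[0,1]`. -/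
def IsCopulaMeasure (N : ℕ) (ν : Measure (Fin N → ℝ)) : Prop :=
  IsProbabilityMeasure ν ∧
    ν (Set.univ.pi fun _ => Set.Icc (0 : ℝ) 1) = 1 ∧
    ∀ i : Fin N, ν.map (fun u => u i) = volume.restrict (Set.Icc (0 : ℝ) 1)

/-- Sklar's theorem (existence): if the marginal CDFs of a probability measure `μ` on `ℝ^N`
are all continuous, then there exists a copula measure `ν` on `[0,1]^N` such that for every
`x`, the joint CDF of `μ` at `x` equals `ν {u | ∀ i, u i ≤ Fᵢ (x i)}`, where `Fᵢ` is the
`i`-th marginal CDF of `μ`. -/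
theorem sklar_existence (N : ℕ) (hN : 0 < N) (μ : Measure (Fin N → ℝ))
    [IsProbabilityMeasure μ]
    (hcont : ∀ i : Fin N,
      Continuous fun x : ℝ => ((μ.map fun y => y i) (Set.Iic x)).toReal) :
    ∃ ν : Measure (Fin N → ℝ), IsCopulaMeasure N ν ∧
      ∀ x : Fin N → ℝ,
        μ {y | ∀ i, y i ≤ x i} =
          ν {u | ∀ i, u i ≤ ((μ.map fun y => y i) (Set.Iic (x i))).toReal} := by
  classical
  have hmp : ∀ i : Fin N, IsProbabilityMeasure (μ.map fun y => y i) := fun i =>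
    Measure.isProbabilityMeasure_map (measurable_pi_apply i).aemeasurable
  have hFeq : ∀ (i : Fin N) (x : ℝ),
      ((μ.map fun y => y i) (Set.Iic x)).toReal = cdf (μ.map fun y => y i) x := fun i x => by
    haveI := hmp i
    exact (cdf_eq_real _ x).symm
  have hconts : ∀ i : Fin N, Continuous (cdf (μ.map fun y => y i)) := fun i =>
    (hcont i).congr fun x => hFeq i x
  set T : (Fin N → ℝ) → (Fin N → ℝ) := fun y i => cdf (μ.map fun y => y i) (y i) with hT
  have hTmeas : Measurable T :=
    measurable_pi_lambda _ fun i => (hconts i).measurable.comp (measurable_pi_apply i)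
  refine ⟨μ.map T, ⟨?_, ?_, ?_⟩, ?_⟩
  · exact Measure.isProbabilityMeasure_map hTmeas.aemeasurable
  · rw [Measure.map_apply hTmeas (MeasurableSet.univ_pi fun _ => measurableSet_Icc)]
    have : T ⁻¹' (Set.univ.pi fun _ => Set.Icc (0 : ℝ) 1) = univ := by
      refine eq_univ_of_forall fun y => ?_
      intro i _
      exact ⟨cdf_nonneg _ _, cdf_le_one _ _⟩
    rw [this, measure_univ]
  · intro i
    haveI := hmp i
    rw [Measure.map_map (measurable_pi_apply i) hTmeas]
    have hco : ((fun u : Fin N → ℝ => u i) ∘ T)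
        = (cdf (μ.map fun y => y i)) ∘ (fun y : Fin N → ℝ => y i) := rfl
    rw [hco, ← Measure.map_map (hconts i).measurable (measurable_pi_apply i)]
    exact map_cdf _ (hconts i)
  · intro x
    simp only [hFeq]
    have hmeasset : MeasurableSet {u : Fin N → ℝ | ∀ i, u i ≤ cdf (μ.map fun y => y i) (x i)} := by
      have : {u : Fin N → ℝ | ∀ i, u i ≤ cdf (μ.map fun y => y i) (x i)}
          = Set.univ.pi fun i => Iic (cdf (μ.map fun y => y i) (x i)) := by
        ext u; simp [Set.mem_pi, Pi.le_def]
      rw [this]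
      exact MeasurableSet.univ_pi fun i => measurableSet_Iic
    rw [Measure.map_apply hTmeas hmeasset]
    have hpre : T ⁻¹' {u : Fin N → ℝ | ∀ i, u i ≤ cdf (μ.map fun y => y i) (x i)}
        = {y : Fin N → ℝ | ∀ i, cdf (μ.map fun y' => y' i) (y i)
            ≤ cdf (μ.map fun y' => y' i) (x i)} := rfl
    rw [hpre]
    set A := {y : Fin N → ℝ | ∀ i, y i ≤ x i} with hA
    set B := {y : Fin N → ℝ | ∀ i, cdf (μ.map fun y' => y' i) (y i)
        ≤ cdf (μ.map fun y' => y' i) (x i)} with hB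
    have hAB : A ⊆ B := fun y hy i => monotone_cdf _ (hy i)
    have hnull : μ (B \ A) = 0 := by
      have hsub : B \ A ⊆ ⋃ i, (fun y : Fin N → ℝ => y i) ⁻¹'
          {t : ℝ | x i < t ∧ cdf (μ.map fun y' => y' i) t ≤ cdf (μ.map fun y' => y' i) (x i)} := by
        rintro y ⟨hyB, hyA⟩
        simp only [hA, mem_setOf_eq, not_forall, not_le] at hyA
        obtain ⟨i, hi⟩ := hyA
        exact mem_iUnion.2 ⟨i, hi, hyB i⟩
      refine measure_mono_null hsub (measure_iUnion_null fun i => ?_)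
      have hEm : MeasurableSet {t : ℝ | x i < t
          ∧ cdf (μ.map fun y' => y' i) t ≤ cdf (μ.map fun y' => y' i) (x i)} :=
        measurableSet_Ioi.inter ((isClosed_Iic.preimage (hconts i)).measurableSet)
      rw [← Measure.map_apply (measurable_pi_apply i) hEm]
      haveI := hmp i
      exact cdf_flat_null _ (hconts i) (x i)
    refine le_antisymm (measure_mono hAB) ?_
    calc μ B = μ (A ∪ B \ A) := by rw [union_diff_cancel hAB]
      _ ≤ μ A + μ (B \ A) := measure_union_le _ _
      _ = μ A := by rw [hnull, add_zero]
end

section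
/- Sklar's theorem (uniqueness for continuous marginals): Let μ be a probability measure on ℝ^N whose marginal CDFs F_1, …, F_N are all continuous. If ν and ν′ are two copula measures on [0,1]^N each satisfying the Sklar equation μ{y : y_i ≤ x_i for all i} = ν{u : u_i ≤ F_i(x_i) for all i} (and likewise for ν′) for every x ∈ ℝ^N, then ν = ν′. -/
open MeasureTheory

private lemma clamp_Ioc_bound {b δ : ℝ} (_h0 : 0 < δ) (h1 : δ ≤ 1/2) :
    (volume.restrict (Set.Icc (0:ℝ) 1)) (Set.Ioc (min (max b δ) (1-δ)) b) ≤ ENNReal.ofReal δ ∧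
    (volume.restrict (Set.Icc (0:ℝ) 1)) (Set.Ioc b (min (max b δ) (1-δ))) ≤ ENNReal.ofReal δ := by
  have hδδ : δ ≤ 1 - δ := by linarith
  rcases le_or_gt b δ with hb | hb
  · have hc : min (max b δ) (1-δ) = δ := by rw [max_eq_right hb, min_eq_left hδδ]
    rw [hc]
    constructor
    · rw [Set.Ioc_eq_empty (by exact fun h => absurd hb (not_le.2 h))]
      simp
    · rw [Measure.restrict_apply measurableSet_Ioc]
      refine le_trans (measure_mono (t := Set.Icc (0:ℝ) δ) ?_) ?_
      · intro x hx
        exact Set.mem_Icc.2 ⟨hx.2.1, hx.1.2⟩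
      · rw [Real.volume_Icc]
        exact ENNReal.ofReal_le_ofReal (by linarith)
  · rcases le_or_gt b (1-δ) with hb' | hb'
    · have hc : min (max b δ) (1-δ) = b := by
        rw [max_eq_left hb.le, min_eq_left hb']
      rw [hc]
      simp
    · have hc : min (max b δ) (1-δ) = 1 - δ := by
        rw [max_eq_left (hb.le), min_eq_right (by linarith)]
      rw [hc]
      constructor
      · rw [Measure.restrict_apply measurableSet_Ioc]
        refine le_trans (measure_mono (t := Set.Icc (1-δ) 1) ?_) ?_
        · intro x hx
          exact Set.mem_Icc.2 ⟨hx.1.1.le, hx.2.2⟩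
        · rw [Real.volume_Icc]
          exact ENNReal.ofReal_le_ofReal (by linarith)
      · rw [Set.Ioc_eq_empty (by exact fun h => absurd hb' (not_lt.2 h.le))]
        simp

private lemma copula_Iic_bound {N : ℕ} {ν : Measure (Fin N → ℝ)}
    (hν : IsCopulaMeasure N ν) (a c : Fin N → ℝ) :
    ν {u | ∀ i, u i ≤ a i} ≤ ν {u | ∀ i, u i ≤ c i} +
      ∑ i : Fin N, (volume.restrict (Set.Icc (0:ℝ) 1)) (Set.Ioc (c i) (a i)) := by
  have hsub : {u : Fin N → ℝ | ∀ i, u i ≤ a i} ⊆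
      {u : Fin N → ℝ | ∀ i, u i ≤ c i} ∪ ⋃ i, (fun u : Fin N → ℝ => u i) ⁻¹' Set.Ioc (c i) (a i) := by
    intro u hu
    by_cases h : ∀ i, u i ≤ c i
    · exact Or.inl h
    · push_neg at h
      obtain ⟨i, hi⟩ := h
      exact Or.inr (Set.mem_iUnion.2 ⟨i, Set.mem_Ioc.2 ⟨hi, hu i⟩⟩)
  refine le_trans (measure_mono hsub) (le_trans (measure_union_le _ _) (add_le_add_right ?_ _))
  refine le_trans (measure_iUnion_fintype_le _ _) (le_of_eq (Finset.sum_congr rfl fun i _ => ?_))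
  rw [← Measure.map_apply (measurable_pi_apply i) measurableSet_Ioc, hν.2.2 i]

/-- Sklar's theorem (uniqueness for continuous marginals): if the marginal CDFs of a
probability measure `μ` on `ℝ^N` are all continuous, then any two copula measures
satisfying the Sklar equation for `μ` coincide. -/
theorem sklar_uniqueness (N : ℕ) (μ : Measure (Fin N → ℝ)) [IsProbabilityMeasure μ]
    (hcont : ∀ i : Fin N,
      Continuous fun x : ℝ => ((μ.map fun y => y i) (Set.Iic x)).toReal)
    (ν ν' : Measure (Fin N → ℝ))
    (hν : IsCopulaMeasure N ν) (hν' : IsCopulaMeasure N ν')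
    (hSklar : ∀ x : Fin N → ℝ,
      μ {y | ∀ i, y i ≤ x i} =
        ν {u | ∀ i, u i ≤ ((μ.map fun y => y i) (Set.Iic (x i))).toReal})
    (hSklar' : ∀ x : Fin N → ℝ,
      μ {y | ∀ i, y i ≤ x i} =
        ν' {u | ∀ i, u i ≤ ((μ.map fun y => y i) (Set.Iic (x i))).toReal}) :
    ν = ν' := by
  classical
  set F : Fin N → ℝ → ℝ := fun i x => ((μ.map fun y => y i) (Set.Iic x)).toReal with hF
  -- surjectivity of each marginal CDF onto (0,1)
  have hsurj : ∀ i : Fin N, ∀ p ∈ Set.Ioo (0:ℝ) 1, ∃ x, F i x = p := by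
    intro i p hp
    haveI : IsProbabilityMeasure (μ.map fun y => y i) :=
      Measure.isProbabilityMeasure_map (measurable_pi_apply i).aemeasurable
    have hFc : F i = ProbabilityTheory.cdf (μ.map fun y => y i) := by
      funext x
      rw [ProbabilityTheory.cdf_eq_real, measureReal_def]
    have hbot : Filter.Tendsto (F i) Filter.atBot (nhds 0) := by
      rw [hFc]; exact ProbabilityTheory.tendsto_cdf_atBot _
    have htop : Filter.Tendsto (F i) Filter.atTop (nhds 1) := by
      rw [hFc]; exact ProbabilityTheory.tendsto_cdf_atTop _
    obtain ⟨x1, hx1⟩ : ∃ x, F i x < p := (hbot.eventually_lt_const hp.1).exists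
    obtain ⟨x2, hx2⟩ : ∃ x, p < F i x := (htop.eventually_const_lt hp.2).exists
    exact intermediate_value_univ x1 x2 (hcont i) ⟨hx1.le, hx2.le⟩
  -- pointwise agreement on interior points
  have hpt : ∀ a : Fin N → ℝ, (∀ i, a i ∈ Set.Ioo (0:ℝ) 1) →
      ν {u | ∀ i, u i ≤ a i} = ν' {u | ∀ i, u i ≤ a i} := by
    intro a ha
    choose x hx using fun i => hsurj i (a i) (ha i)
    have hset : {u : Fin N → ℝ | ∀ i, u i ≤ ((μ.map fun y => y i) (Set.Iic (x i))).toReal}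
        = {u | ∀ i, u i ≤ a i} := by
      ext u
      simp only [Set.mem_setOf_eq]
      exact forall_congr' fun i => by rw [show ((μ.map fun y => y i) (Set.Iic (x i))).toReal
        = a i from hx i]
    rw [← hset, ← hSklar x, hSklar' x]
  -- agreement on all lower sets
  have hle : ∀ (ρ σ : Measure (Fin N → ℝ)), IsCopulaMeasure N ρ → IsCopulaMeasure N σ →
      (∀ a : Fin N → ℝ, (∀ i, a i ∈ Set.Ioo (0:ℝ) 1) →
        ρ {u | ∀ i, u i ≤ a i} = σ {u | ∀ i, u i ≤ a i}) →
      ∀ a : Fin N → ℝ, ρ {u | ∀ i, u i ≤ a i} ≤ σ {u | ∀ i, u i ≤ a i} := by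
    intro ρ σ hρ hσ hag a
    haveI := hρ.1
    haveI := hσ.1
    refine ENNReal.le_of_forall_pos_le_add fun ε hε _ => ?_
    have hε' : (0:ℝ) < ε := hε
    set δ : ℝ := min (1/2) (ε / (2 * N + 1)) with hδ
    have hδ0 : 0 < δ := lt_min (by norm_num) (div_pos hε' (by positivity))
    have hδh : δ ≤ 1/2 := min_le_left _ _
    set c : Fin N → ℝ := fun i => min (max (a i) δ) (1 - δ) with hc
    have hci : ∀ i, c i ∈ Set.Ioo (0:ℝ) 1 := by
      intro i
      constructor
      · exact lt_min (lt_of_lt_of_le hδ0 (le_max_right _ _)) (by linarith)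
      · exact lt_of_le_of_lt (min_le_right _ _) (by linarith)
    have hsum1 : ∑ i : Fin N, (volume.restrict (Set.Icc (0:ℝ) 1)) (Set.Ioc (c i) (a i))
        ≤ (N : ENNReal) * ENNReal.ofReal δ := by
      calc ∑ i : Fin N, (volume.restrict (Set.Icc (0:ℝ) 1)) (Set.Ioc (c i) (a i))
          ≤ ∑ _i : Fin N, ENNReal.ofReal δ :=
            Finset.sum_le_sum fun i _ => (clamp_Ioc_bound hδ0 hδh).1
        _ = (N : ENNReal) * ENNReal.ofReal δ := by
            simp [Finset.sum_const, nsmul_eq_mul]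
    have hsum2 : ∑ i : Fin N, (volume.restrict (Set.Icc (0:ℝ) 1)) (Set.Ioc (a i) (c i))
        ≤ (N : ENNReal) * ENNReal.ofReal δ := by
      calc ∑ i : Fin N, (volume.restrict (Set.Icc (0:ℝ) 1)) (Set.Ioc (a i) (c i))
          ≤ ∑ _i : Fin N, ENNReal.ofReal δ :=
            Finset.sum_le_sum fun i _ => (clamp_Ioc_bound hδ0 hδh).2
        _ = (N : ENNReal) * ENNReal.ofReal δ := by
            simp [Finset.sum_const, nsmul_eq_mul]
    have h2 : (N : ENNReal) * ENNReal.ofReal δ + (N : ENNReal) * ENNReal.ofReal δ ≤ ε := by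
      have : (N : ENNReal) * ENNReal.ofReal δ = ENNReal.ofReal (N * δ) := by
        rw [ENNReal.ofReal_mul (by positivity)]
        simp
      rw [this, ← ENNReal.ofReal_add (by positivity) (by positivity)]
      rw [← ENNReal.ofReal_coe_nnreal]
      refine ENNReal.ofReal_le_ofReal ?_
      have hδ2 : δ ≤ ε / (2 * N + 1) := min_le_right _ _
      have h2N : (2 * (N:ℝ)) * (ε / (2 * N + 1)) ≤ ε := by
        rw [mul_div_assoc']
        rw [div_le_iff₀ (by positivity)]
        nlinarith [hε'.le]
      nlinarith [hδ2, hδ0.le, hε'.le]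
    calc ρ {u | ∀ i, u i ≤ a i}
        ≤ ρ {u | ∀ i, u i ≤ c i} + (N : ENNReal) * ENNReal.ofReal δ :=
          le_trans (copula_Iic_bound hρ a c) (add_le_add_right hsum1 _)
      _ = σ {u | ∀ i, u i ≤ c i} + (N : ENNReal) * ENNReal.ofReal δ := by rw [hag c hci]
      _ ≤ (σ {u | ∀ i, u i ≤ a i} + (N : ENNReal) * ENNReal.ofReal δ)
            + (N : ENNReal) * ENNReal.ofReal δ := by
          exact add_le_add_left
            (le_trans (copula_Iic_bound hσ c a) (add_le_add_right hsum2 _)) _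
      _ ≤ σ {u | ∀ i, u i ≤ a i} + ε := by
          rw [add_assoc]
          exact add_le_add_right h2 _
  have key : ∀ a : Fin N → ℝ, ν {u | ∀ i, u i ≤ a i} = ν' {u | ∀ i, u i ≤ a i} :=
    fun a => le_antisymm (hle ν ν' hν hν' hpt a)
      (hle ν' ν hν' hν (fun b hb => (hpt b hb).symm) a)
  -- extensionality via the π-system of products of Iic
  haveI := hν.1
  haveI := hν'.1
  have hgen : (inferInstance : MeasurableSpace (Fin N → ℝ)) =
      MeasurableSpace.generateFrom
        (Set.pi Set.univ '' Set.pi Set.univ fun _ : Fin N => Set.range Set.Iic) := by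
    refine (generateFrom_eq_pi (fun _ => ?_) (fun _ => ?_)).symm
    · exact (borel_eq_generateFrom_Iic ℝ).symm.trans BorelSpace.measurable_eq.symm
    · refine ⟨fun n => Set.Iic (n : ℝ), fun n => ⟨(n : ℝ), rfl⟩, ?_⟩
      ext x
      simp only [Set.mem_iUnion, Set.mem_Iic, Set.mem_univ, iff_true]
      exact exists_nat_ge x
  refine ext_of_generate_finite _ hgen (IsPiSystem.pi fun _ => isPiSystem_Iic) ?_ (by simp)
  rintro _ ⟨s, hs, rfl⟩
  choose b hb using fun i => hs i (Set.mem_univ i)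
  have : Set.univ.pi s = {u : Fin N → ℝ | ∀ i, u i ≤ b i} := by
    ext u
    simp only [Set.mem_pi, Set.mem_univ, forall_true_left, Set.mem_setOf_eq]
    exact forall_congr' fun i => by rw [← hb i, Set.mem_Iic]
  rw [this]
  exact key b
end

section
/- Sklar's theorem (converse): Let ν be a copula measure on [0,1]^N and let F_1, …, F_N be CDFs of probability measures on ℝ. Then there exists a probability measure μ on ℝ^N whose joint CDF equals the function H(x) = ν{u : u_i ≤ F_i(x_i) for all i}, and whose i-th marginal CDF equals F_i for every i = 1, …, N. -/
open MeasureTheory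

open ProbabilityTheory Set Filter Topology in
/-- Quantile (generalized inverse CDF), with junk value `0` outside `(0,1)`. -/
noncomputable def sklarQ (p : Measure ℝ) (t : ℝ) : ℝ :=
  if t ∈ Set.Ioo (0:ℝ) 1 then sInf {x | t ≤ ProbabilityTheory.cdf p x} else 0

open ProbabilityTheory Set Filter Topology in
lemma sklarQ_le_iff (p : Measure ℝ) [IsProbabilityMeasure p] {t : ℝ}
    (ht : t ∈ Set.Ioo (0:ℝ) 1) (x : ℝ) : sklarQ p t ≤ x ↔ t ≤ cdf p x := by
  rw [sklarQ, if_pos ht]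
  set S : Set ℝ := {x | t ≤ cdf p x} with hS
  have hne : S.Nonempty := by
    have := (tendsto_cdf_atTop p).eventually_const_le ht.2
    obtain ⟨y, hy⟩ := this.exists
    exact ⟨y, hy⟩
  have hbdd : BddBelow S := by
    have := (tendsto_cdf_atBot p).eventually_lt_const ht.1
    obtain ⟨y, hy⟩ := this.exists
    refine ⟨y, fun z hz => ?_⟩
    by_contra hzy
    exact absurd (hz.trans ((monotone_cdf p) (le_of_lt (not_le.mp hzy)))) (not_le.mpr hy)
  constructor
  · intro h
    refine le_trans ?_ ((monotone_cdf p) h)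
    -- t ≤ cdf p (sInf S)
    by_contra hlt
    push_neg at hlt
    have hrc : Filter.Tendsto (cdf p) (𝓝[≥] (sInf S)) (𝓝 (cdf p (sInf S))) :=
      (cdf p).right_continuous (sInf S)
    have hev : ∀ᶠ y in 𝓝[≥] (sInf S), cdf p y < t :=
      hrc.eventually (Filter.Tendsto.eventually_lt_const hlt tendsto_id)
    obtain ⟨u, hu, hsub⟩ := mem_nhdsGE_iff_exists_Ico_subset.mp hev
    have hSu : ∀ z ∈ S, u ≤ z := by
      intro z hz
      by_contra hzu
      push_neg at hzu
      have hz' : t ≤ cdf p z := hz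
      rcases le_or_gt (sInf S) z with h1 | h1
      · exact absurd hz' (not_le.mpr (hsub ⟨h1, hzu⟩))
      · exact absurd (csInf_le hbdd hz) (not_le.mpr h1)
    exact absurd ((le_csInf hne hSu).trans_lt hu) (lt_irrefl _)
  · intro h
    exact csInf_le hbdd h

open ProbabilityTheory Set in
lemma measurable_sklarQ (p : Measure ℝ) [IsProbabilityMeasure p] : Measurable (sklarQ p) := by
  apply measurable_of_Iic
  intro a
  have : sklarQ p ⁻¹' Iic a =
      (Ioo (0:ℝ) 1 ∩ Iic (cdf p a)) ∪ ((Ioo (0:ℝ) 1)ᶜ ∩ {t : ℝ | (0:ℝ) ≤ a}) := by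
    ext t
    by_cases ht : t ∈ Ioo (0:ℝ) 1
    · simp only [mem_preimage, mem_Iic, mem_union, mem_inter_iff, ht, mem_compl_iff,
        not_true_eq_false, false_and, or_false, true_and, mem_setOf_eq]
      exact sklarQ_le_iff p ht a
    · simp only [mem_preimage, mem_Iic, mem_union, mem_inter_iff, ht, mem_compl_iff,
        not_false_eq_true, true_and, false_and, false_or, mem_setOf_eq, sklarQ, if_neg ht]
      simp
  rw [this]
  by_cases ha : (0:ℝ) ≤ a
  · simp only [ha, setOf_true, inter_univ]
    exact (measurableSet_Ioo.inter measurableSet_Iic).union measurableSet_Ioo.compl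
  · simp only [ha, setOf_false, inter_empty, union_empty]
    exact measurableSet_Ioo.inter measurableSet_Iic

/-- Sklar's theorem (converse): given a copula measure `ν` on `[0,1]^N` and CDFs `Fᵢ` of
probability measures `P i` on `ℝ`, there is a probability measure `μ` on `ℝ^N` whose joint
CDF is `x ↦ ν {u | ∀ i, u i ≤ Fᵢ (x i)}` and whose `i`-th marginal CDF equals `Fᵢ`. -/
theorem sklar_converse (N : ℕ) (ν : Measure (Fin N → ℝ)) (hν : IsCopulaMeasure N ν)
    (P : Fin N → Measure ℝ) [∀ i, IsProbabilityMeasure (P i)]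
    (F : Fin N → ℝ → ℝ) (hF : ∀ i x, F i x = (P i (Set.Iic x)).toReal) :
    ∃ μ : Measure (Fin N → ℝ), IsProbabilityMeasure μ ∧
      (∀ x : Fin N → ℝ,
        (μ {y | ∀ i, y i ≤ x i}).toReal = (ν {u | ∀ i, u i ≤ F i (x i)}).toReal) ∧
      ∀ i : Fin N, ∀ x : ℝ, ((μ.map fun y => y i) (Set.Iic x)).toReal = F i x := by
  classical
  obtain ⟨hprob, hcube, hmarg⟩ := hν
  have hFc : ∀ i x, F i x = ProbabilityTheory.cdf (P i) x := by
    intro i x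
    rw [hF i x, ProbabilityTheory.cdf_eq_real, measureReal_def]
  set G : (Fin N → ℝ) → (Fin N → ℝ) := fun u i => sklarQ (P i) (u i) with hG
  have hGm : Measurable G :=
    measurable_pi_lambda _ fun i => (measurable_sklarQ (P i)).comp (measurable_pi_apply i)
  -- the set where all coordinates are in (0,1) is conull
  set E : Set (Fin N → ℝ) := {u | ∀ i, u i ∈ Set.Ioo (0:ℝ) 1} with hE
  have hEnull : ν Eᶜ = 0 := by
    have hsub : Eᶜ ⊆ ⋃ i, (fun u : Fin N → ℝ => u i) ⁻¹' (Set.Ioo (0:ℝ) 1)ᶜ := by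
      intro u hu
      simp only [hE, Set.mem_compl_iff, Set.mem_setOf_eq, not_forall] at hu
      obtain ⟨i, hi⟩ := hu
      exact Set.mem_iUnion.mpr ⟨i, hi⟩
    refine measure_mono_null hsub (measure_iUnion_null fun i => ?_)
    have hmap : ν ((fun u : Fin N → ℝ => u i) ⁻¹' (Set.Ioo (0:ℝ) 1)ᶜ)
        = (ν.map (fun u => u i)) (Set.Ioo (0:ℝ) 1)ᶜ := by
      rw [Measure.map_apply (measurable_pi_apply i) measurableSet_Ioo.compl]
    rw [hmap, hmarg i, Measure.restrict_apply measurableSet_Ioo.compl]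
    have hz : volume ({0, 1} : Set ℝ) = 0 := by
      rw [Set.insert_eq]
      exact measure_union_null (by simp) (by simp)
    refine measure_mono_null ?_ hz
    intro t ht
    obtain ⟨ht1, ht2⟩ := ht
    simp only [Set.mem_compl_iff, Set.mem_Ioo, not_and_or, not_lt] at ht1
    rcases ht1 with h | h
    · exact Or.inl (le_antisymm h ht2.1)
    · exact Or.inr (le_antisymm ht2.2 h)
  have hkey : ∀ A B : Set (Fin N → ℝ), A ∩ E = B ∩ E → ν A = ν B := by
    intro A B h
    rw [← measure_inter_conull hEnull, h, measure_inter_conull hEnull]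
  -- key per-coordinate equivalence on E
  have hiff : ∀ (u : Fin N → ℝ), u ∈ E → ∀ i (x : ℝ),
      (sklarQ (P i) (u i) ≤ x ↔ u i ≤ F i x) := by
    intro u hu i x
    rw [hFc i x]
    exact sklarQ_le_iff (P i) (hu i) x
  refine ⟨ν.map G, ?_, ?_, ?_⟩
  · exact Measure.isProbabilityMeasure_map hGm.aemeasurable
  · intro x
    have hSmeas : MeasurableSet {y : Fin N → ℝ | ∀ i, y i ≤ x i} := by
      have : {y : Fin N → ℝ | ∀ i, y i ≤ x i} = Set.univ.pi (fun i => Set.Iic (x i)) := by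
        ext y; simp [Set.mem_pi, Pi.le_def]
      rw [this]
      exact MeasurableSet.univ_pi fun i => measurableSet_Iic
    rw [Measure.map_apply hGm hSmeas]
    congr 1
    apply hkey
    ext u
    simp only [Set.mem_inter_iff, Set.mem_preimage, Set.mem_setOf_eq, hG, and_congr_left_iff]
    intro hu
    exact forall_congr' fun i => hiff u hu i (x i)
  · intro i x
    have hproj : Measurable (fun y : Fin N → ℝ => y i) := measurable_pi_apply i
    rw [Measure.map_map hproj hGm, Measure.map_apply (hproj.comp hGm) measurableSet_Iic]
    have h1 : ((fun y : Fin N → ℝ => y i) ∘ G) ⁻¹' Set.Iic x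
        = {u : Fin N → ℝ | sklarQ (P i) (u i) ≤ x} := rfl
    rw [h1]
    have h2 : ν {u : Fin N → ℝ | sklarQ (P i) (u i) ≤ x} = ν {u : Fin N → ℝ | u i ≤ F i x} := by
      apply hkey
      ext u
      simp only [Set.mem_inter_iff, Set.mem_setOf_eq, and_congr_left_iff]
      intro hu
      exact hiff u hu i x
    rw [h2]
    have h3 : ν {u : Fin N → ℝ | u i ≤ F i x} = (ν.map (fun u => u i)) (Set.Iic (F i x)) := by
      rw [Measure.map_apply (measurable_pi_apply i) measurableSet_Iic]
      rfl
    rw [h3, hmarg i, Measure.restrict_apply measurableSet_Iic]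
    have hc0 : 0 ≤ F i x := by rw [hF]; exact ENNReal.toReal_nonneg
    have hc1 : F i x ≤ 1 := by
      rw [hFc]; exact ProbabilityTheory.cdf_le_one _ _
    have h4 : Set.Iic (F i x) ∩ Set.Icc (0:ℝ) 1 = Set.Icc 0 (F i x) := by
      ext t
      simp only [Set.mem_inter_iff, Set.mem_Iic, Set.mem_Icc]
      constructor
      · rintro ⟨h, h0, _⟩; exact ⟨h0, h⟩
      · rintro ⟨h0, h⟩; exact ⟨h, h0, h.trans hc1⟩
    rw [h4, Real.volume_Icc, sub_zero, ENNReal.toReal_ofReal hc0]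
end

section
/- Multivariate invariance of the copula under strictly increasing transformations: Let X_1, …, X_N be real random variables on a common probability space with CDFs F_{X_1}, …, F_{X_N}, and let ν be a copula measure on [0,1]^N such that for all x ∈ ℝ^N, P(X_n ≤ x_n for all n) = ν{u : u_n ≤ F_{X_n}(x_n) for all n}. Let g_1, …, g_N : ℝ → ℝ be strictly increasing bijections of ℝ. Then the same copula measure ν satisfies the Sklar equation for (g_1(X_1), …, g_N(X_N)): for all y ∈ ℝ^N, P(g_n(X_n) ≤ y_n for all n) = ν{u : u_n ≤ F_{g_n(X_n)}(y_n) for all n}, where F_{g_n(X_n)} is the CDF of g_n(X_n). -/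
open MeasureTheory

/-- Multivariate invariance of the copula under strictly increasing transformations:
if `ν` is a copula for `(X_1, …, X_N)` (i.e. it satisfies the Sklar equation with the
marginal CDFs of the `X_n`), and `g_1, …, g_N` are strictly increasing bijections of `ℝ`,
then the same `ν` satisfies the Sklar equation for `(g_1(X_1), …, g_N(X_N))` with the
marginal CDFs of the `g_n(X_n)`. -/
theorem copula_invariance_strictMono_multivariate {Ω : Type*} [MeasurableSpace Ω]
    (P : Measure Ω) [IsProbabilityMeasure P] (N : ℕ)
    (X : Fin N → Ω → ℝ) (hX : ∀ n, Measurable (X n))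
    (ν : Measure (Fin N → ℝ)) (hν : IsCopulaMeasure N ν)
    (hSklar : ∀ x : Fin N → ℝ,
      P {ω | ∀ n, X n ω ≤ x n} =
        ν {u | ∀ n, u n ≤ (P {ω | X n ω ≤ x n}).toReal})
    (g : Fin N → ℝ → ℝ) (hg : ∀ n, StrictMono (g n))
    (hgb : ∀ n, Function.Bijective (g n)) :
    ∀ y : Fin N → ℝ,
      P {ω | ∀ n, g n (X n ω) ≤ y n} =
        ν {u | ∀ n, u n ≤ (P {ω | g n (X n ω) ≤ y n}).toReal} := by
  intro y
  set x : Fin N → ℝ := fun n => Function.invFun (g n) (y n) with hx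
  have key : ∀ n a, g n a ≤ y n ↔ a ≤ x n := by
    intro n a
    have h : g n (x n) = y n := Function.invFun_eq ((hgb n).surjective (y n))
    rw [← h]
    exact ⟨fun h' => (hg n).le_iff_le.mp h', fun h' => (hg n).monotone h'⟩
  have h1 : {ω | ∀ n, g n (X n ω) ≤ y n} = {ω | ∀ n, X n ω ≤ x n} := by
    ext ω; simp only [Set.mem_setOf_eq, key]
  have h2 : ∀ n, {ω | g n (X n ω) ≤ y n} = {ω | X n ω ≤ x n} := by
    intro n; ext ω; simp only [Set.mem_setOf_eq, key]
  rw [h1]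
  simp only [h2]
  exact hSklar x
end

section
/- Widrow's sampling identity for quantization: Let q > 0 and let X be a real random variable with probability density function f (with respect to Lebesgue measure). Let Q_q(x) = q⌊x/q⌋ + q/2 be the uniform quantizer with step size q, and let f_W(x) = (1/q)·1_{[−q/2, q/2]}(x) be the density of the uniform distribution on [−q/2, q/2]. Then for every integer k, P(Q_q(X) = kq + q/2) = q · (f_W ⋆ f)(kq + q/2), where ⋆ denotes convolution of functions on ℝ; that is, the probability mass function of the quantizer output is obtained by sampling the convolution f_W ⋆ f at the quantizer output levels and scaling by q. -/
open MeasureTheory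

/-- The (infinite-level) uniform quantizer with step size `q`. -/
noncomputable def uniformQuantizer (q : ℝ) (x : ℝ) : ℝ := q * ⌊x / q⌋ + q / 2

/-- Widrow's sampling identity for quantization: if `X` has density `f`, then the
probability mass of the quantizer output at the level `k q + q/2` equals `q` times the
convolution of `f` with the uniform density `f_W` on `[-q/2, q/2]`, sampled at that
level. -/
theorem widrow_sampling_identity (q : ℝ) (hq : 0 < q)
    {Ω : Type*} [MeasurableSpace Ω] (P : Measure Ω) [IsProbabilityMeasure P]
    (X : Ω → ℝ) (hX : Measurable X)
    (f : ℝ → ℝ) (hf_nonneg : 0 ≤ f) (hf_meas : Measurable f)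
    (hpdf : P.map X = volume.withDensity fun x => ENNReal.ofReal (f x))
    (fW : ℝ → ℝ)
    (hfW : fW = (Set.Icc (-(q / 2)) (q / 2)).indicator fun _ => 1 / q)
    (k : ℤ) :
    P {ω | uniformQuantizer q (X ω) = k * q + q / 2} =
      ENNReal.ofReal (q * ∫ x : ℝ, fW (k * q + q / 2 - x) * f x) := by
  set c : ℝ := k * q with hc
  -- the event equals X ∈ Ico c (c+q)
  have hset : {ω | uniformQuantizer q (X ω) = (k : ℝ) * q + q / 2}
      = X ⁻¹' Set.Ico c (c + q) := by
    ext ω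
    simp only [Set.mem_setOf_eq, Set.mem_preimage, Set.mem_Ico, uniformQuantizer]
    constructor
    · intro h
      have h1 : q * (⌊X ω / q⌋ : ℝ) = (k : ℝ) * q := by linarith
      have h2 : (⌊X ω / q⌋ : ℝ) = (k : ℝ) := by
        have := mul_left_cancel₀ hq.ne' (by linarith [h1] : q * (⌊X ω / q⌋ : ℝ) = q * (k : ℝ))
        exact this
      have h3 : ⌊X ω / q⌋ = k := by exact_mod_cast h2
      have h4 := Int.floor_eq_iff.mp h3
      constructor
      · exact (le_div_iff₀ hq).mp h4.1
      · have h5 := (div_lt_iff₀ hq).mp h4.2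
        linarith
    · rintro ⟨h1, h2⟩
      have h3 : ⌊X ω / q⌋ = k := by
        rw [Int.floor_eq_iff]
        constructor
        · rw [le_div_iff₀ hq]; linarith
        · rw [div_lt_iff₀ hq]; linarith
      rw [h3]; ring
  have hIco : MeasurableSet (Set.Ico c (c + q)) := measurableSet_Ico
  have hmap : P {ω | uniformQuantizer q (X ω) = (k : ℝ) * q + q / 2}
      = (P.map X) (Set.Ico c (c + q)) := by
    rw [Measure.map_apply hX hIco, hset]
  rw [hmap, hpdf, withDensity_apply _ hIco]
  -- finiteness, integrability
  have hfin : ∫⁻ x in Set.Ico c (c + q), ENNReal.ofReal (f x) < ⊤ := by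
    have : ∫⁻ x in Set.Ico c (c + q), ENNReal.ofReal (f x)
        ≤ ∫⁻ x, ENNReal.ofReal (f x) := setLIntegral_le_lintegral _ _
    have htot : ∫⁻ x, ENNReal.ofReal (f x) = 1 := by
      have h1 : (P.map X) Set.univ = 1 := by
        rw [Measure.map_apply hX MeasurableSet.univ]; simp
      rw [hpdf, withDensity_apply _ MeasurableSet.univ, Measure.restrict_univ] at h1
      exact h1
    rw [htot] at this
    exact lt_of_le_of_lt this (by norm_num)
  have hint : Integrable f (volume.restrict (Set.Ico c (c + q))) := by
    refine ⟨hf_meas.aestronglyMeasurable, ?_⟩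
    rw [hasFiniteIntegral_iff_ofReal (Filter.Eventually.of_forall fun x => hf_nonneg x)]
    exact hfin
  have hlin : ∫⁻ x in Set.Ico c (c + q), ENNReal.ofReal (f x)
      = ENNReal.ofReal (∫ x in Set.Ico c (c + q), f x) := by
    rw [ofReal_integral_eq_lintegral_ofReal hint
      (Filter.Eventually.of_forall fun x => hf_nonneg x)]
  rw [hlin]
  -- compute the RHS integral
  have hker : ∀ x : ℝ, fW ((k : ℝ) * q + q / 2 - x) * f x
      = (Set.Icc c (c + q)).indicator (fun y => (1 / q) * f y) x := by
    intro x
    rw [hfW]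
    by_cases hx : x ∈ Set.Icc c (c + q)
    · rw [Set.indicator_of_mem hx, Set.indicator_of_mem]
      simp only [Set.mem_Icc] at hx ⊢
      constructor <;> [skip; skip] <;> linarith [hx.1, hx.2]
    · rw [Set.indicator_of_notMem hx, Set.indicator_of_notMem, zero_mul]
      simp only [Set.mem_Icc] at hx ⊢
      intro h
      exact hx ⟨by linarith [h.2], by linarith [h.1]⟩
  have hint2 : q * ∫ x : ℝ, fW ((k : ℝ) * q + q / 2 - x) * f x
      = ∫ x in Set.Ico c (c + q), f x := by
    simp_rw [hker]
    rw [integral_indicator measurableSet_Icc, integral_const_mul,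
      ← MeasureTheory.integral_Icc_eq_integral_Ico]
    field_simp
  rw [hint2]
end

section
/- Kendall's tau formula via the copula (Nelsen, p.161): Let (X, Y) be a pair of real random variables with continuous marginal CDFs F_X and F_Y, and let ν be a copula measure on [0,1]² with CDF C(u, v) = ν{w : w_1 ≤ u, w_2 ≤ v} satisfying the Sklar equation P(X ≤ x, Y ≤ y) = C(F_X(x), F_Y(y)) for all x, y ∈ ℝ. Let (X′, Y′) be an independent copy of (X, Y) (independent of (X, Y) and with the same joint distribution). Then Kendall's tau of (X, Y) satisfies τ = P((X − X′)(Y − Y′) > 0) − P((X − X′)(Y − Y′) < 0) = 4 · E[C(F_X(X), F_Y(Y))] − 1. -/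
open MeasureTheory ProbabilityTheory

/-- A copula measure on `[0,1]²`: a probability measure on `ℝ × ℝ` concentrated on the unit
square whose two one-dimensional marginals are both uniform on `[0,1]`. -/
def IsCopulaMeasure2 (ν : Measure (ℝ × ℝ)) : Prop :=
  IsProbabilityMeasure ν ∧
    ν (Set.Icc (0 : ℝ) 1 ×ˢ Set.Icc (0 : ℝ) 1) = 1 ∧
    ν.map Prod.fst = volume.restrict (Set.Icc (0 : ℝ) 1) ∧
    ν.map Prod.snd = volume.restrict (Set.Icc (0 : ℝ) 1)

open Filter Topology in
lemma singleton_null_of_cdf_cont (m : Measure ℝ) [IsFiniteMeasure m]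
    (F : ℝ → ℝ) (hF : ∀ x, m (Set.Iic x) = ENNReal.ofReal (F x))
    (hcont : Continuous F) (a : ℝ) : m {a} = 0 := by
  have hIio : m (Set.Iio a) = m (Set.Iic a) := by
    have hU : (⋃ n : ℕ, Set.Iic (a - 1/(n+1))) = Set.Iio a := by
      ext y
      simp only [Set.mem_iUnion, Set.mem_Iic, Set.mem_Iio]
      constructor
      · rintro ⟨n, hn⟩
        have h0 : (0:ℝ) < 1/((n:ℝ)+1) := by positivity
        linarith
      · intro hy
        obtain ⟨n, hn⟩ := exists_nat_one_div_lt (sub_pos.mpr hy)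
        exact ⟨n, by linarith⟩
    have hmono : Monotone (fun n : ℕ => Set.Iic (a - 1/((n:ℝ)+1))) := by
      intro i j hij
      apply Set.Iic_subset_Iic.mpr
      have h1 : (1:ℝ)/((j:ℝ)+1) ≤ 1/((i:ℝ)+1) := by
        apply one_div_le_one_div_of_le (by positivity)
        have : (i:ℝ) ≤ j := by exact_mod_cast hij
        linarith
      linarith
    have h1 : Tendsto (fun n : ℕ => m (Set.Iic (a - 1/((n:ℝ)+1)))) atTop (𝓝 (m (Set.Iio a))) := by
      rw [← hU]; exact tendsto_measure_iUnion_atTop hmono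
    have h2 : Tendsto (fun n : ℕ => m (Set.Iic (a - 1/((n:ℝ)+1)))) atTop (𝓝 (m (Set.Iic a))) := by
      simp_rw [hF]
      apply (ENNReal.continuous_ofReal.tendsto _).comp
      apply (hcont.tendsto a).comp
      have h3 : Tendsto (fun n : ℕ => (1:ℝ)/((n:ℝ)+1)) atTop (𝓝 0) :=
        tendsto_one_div_add_atTop_nhds_zero_nat
      simpa using tendsto_const_nhds.sub h3
    exact tendsto_nhds_unique h1 h2
  have hsplit : m (Set.Iic a) = m (Set.Iio a) + m {a} := by
    rw [← Set.Iio_union_right, measure_union (by simp) (measurableSet_singleton a)]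
  rw [hIio] at hsplit
  nth_rewrite 1 [← add_zero (m (Set.Iic a))] at hsplit
  exact ((ENNReal.add_right_inj (measure_ne_top m _)).mp hsplit).symm


/-- Kendall's tau formula via the copula (Nelsen, p. 161): if `(X, Y)` has continuous
marginal CDFs `F_X`, `F_Y` and copula `ν` with CDF `C` satisfying the Sklar equation, and
`(X', Y')` is an independent copy of `(X, Y)`, then Kendall's tau
`τ = P((X - X')(Y - Y') > 0) - P((X - X')(Y - Y') < 0)` equals
`4 E[C(F_X(X), F_Y(Y))] - 1`. -/
theorem kendall_tau_copula
    {Ω : Type*} [MeasurableSpace Ω] (P : Measure Ω) [IsProbabilityMeasure P]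
    (X Y X' Y' : Ω → ℝ) (hX : Measurable X) (hY : Measurable Y)
    (hX' : Measurable X') (hY' : Measurable Y')
    (F_X F_Y : ℝ → ℝ)
    (hFX : ∀ x, F_X x = (P {ω | X ω ≤ x}).toReal)
    (hFY : ∀ y, F_Y y = (P {ω | Y ω ≤ y}).toReal)
    (hFXcont : Continuous F_X) (hFYcont : Continuous F_Y)
    (ν : Measure (ℝ × ℝ)) (hν : IsCopulaMeasure2 ν)
    (C : ℝ → ℝ → ℝ)
    (hC : ∀ u v : ℝ, C u v = (ν {w | w.1 ≤ u ∧ w.2 ≤ v}).toReal)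
    (hSklar : ∀ x y : ℝ,
      (P {ω | X ω ≤ x ∧ Y ω ≤ y}).toReal = C (F_X x) (F_Y y))
    (hcopy : P.map (fun ω => (X' ω, Y' ω)) = P.map (fun ω => (X ω, Y ω)))
    (hindep : IndepFun (fun ω => (X ω, Y ω)) (fun ω => (X' ω, Y' ω)) P) :
    (P {ω | (X ω - X' ω) * (Y ω - Y' ω) > 0}).toReal -
        (P {ω | (X ω - X' ω) * (Y ω - Y' ω) < 0}).toReal =
      4 * (∫ ω, C (F_X (X ω)) (F_Y (Y ω)) ∂P) - 1 := by
  have hXY : Measurable (fun ω => (X ω, Y ω)) := hX.prodMk hY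
  have hXY' : Measurable (fun ω => (X' ω, Y' ω)) := hX'.prodMk hY'
  set μ : Measure (ℝ × ℝ) := P.map (fun ω => (X ω, Y ω)) with hμdef
  haveI hμprob : IsProbabilityMeasure μ := Measure.isProbabilityMeasure_map hXY.aemeasurable
  -- marginals
  have hmapX : μ.map Prod.fst = P.map X := by
    rw [hμdef, Measure.map_map measurable_fst hXY]; rfl
  have hmapY : μ.map Prod.snd = P.map Y := by
    rw [hμdef, Measure.map_map measurable_snd hXY]; rfl
  haveI : IsProbabilityMeasure (P.map X) := Measure.isProbabilityMeasure_map hX.aemeasurable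
  haveI : IsProbabilityMeasure (P.map Y) := Measure.isProbabilityMeasure_map hY.aemeasurable
  -- marginals atomless
  have hmX : ∀ a : ℝ, (P.map X) {a} = 0 := by
    apply singleton_null_of_cdf_cont (P.map X) F_X _ hFXcont
    intro x
    rw [Measure.map_apply hX measurableSet_Iic, hFX,
      ENNReal.ofReal_toReal (measure_ne_top P _)]
    rfl
  have hmY : ∀ a : ℝ, (P.map Y) {a} = 0 := by
    apply singleton_null_of_cdf_cont (P.map Y) F_Y _ hFYcont
    intro y
    rw [Measure.map_apply hY measurableSet_Iic, hFY,
      ENNReal.ofReal_toReal (measure_ne_top P _)]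
    rfl
  have hμfst : ∀ a : ℝ, μ {r : ℝ × ℝ | r.1 = a} = 0 := by
    intro a
    have : {r : ℝ × ℝ | r.1 = a} = Prod.fst ⁻¹' {a} := rfl
    rw [this, ← Measure.map_apply measurable_fst (measurableSet_singleton a), hmapX, hmX]
  have hμsnd : ∀ b : ℝ, μ {r : ℝ × ℝ | r.2 = b} = 0 := by
    intro b
    have : {r : ℝ × ℝ | r.2 = b} = Prod.snd ⁻¹' {b} := rfl
    rw [this, ← Measure.map_apply measurable_snd (measurableSet_singleton b), hmapY, hmY]
  -- joint law is the product
  set π : Measure ((ℝ × ℝ) × (ℝ × ℝ)) := μ.prod μ with hπdef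
  have h_joint : P.map (fun ω => ((X ω, Y ω), (X' ω, Y' ω))) = π := by
    rw [(indepFun_iff_map_prod_eq_prod_map_map hXY.aemeasurable hXY'.aemeasurable).mp hindep,
      hcopy]
  -- the three events
  set v : (ℝ × ℝ) × (ℝ × ℝ) → ℝ := fun p => (p.1.1 - p.2.1) * (p.1.2 - p.2.2) with hvdef
  have hv : Measurable v :=
    (measurable_fst.fst.sub measurable_snd.fst).mul (measurable_fst.snd.sub measurable_snd.snd)
  have hSp : MeasurableSet {p : (ℝ × ℝ) × (ℝ × ℝ) | 0 < v p} :=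
    measurableSet_lt measurable_const hv
  have hSm : MeasurableSet {p : (ℝ × ℝ) × (ℝ × ℝ) | v p < 0} :=
    measurableSet_lt hv measurable_const
  have hS0 : MeasurableSet {p : (ℝ × ℝ) × (ℝ × ℝ) | v p = 0} :=
    measurableSet_eq_fun hv measurable_const
  have hT : Measurable (fun ω => ((X ω, Y ω), (X' ω, Y' ω))) := hXY.prodMk hXY'
  have hPp : P {ω | (X ω - X' ω) * (Y ω - Y' ω) > 0} = π {p | 0 < v p} := by
    rw [← h_joint, Measure.map_apply hT hSp]; rfl
  have hPm : P {ω | (X ω - X' ω) * (Y ω - Y' ω) < 0} = π {p | v p < 0} := by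
    rw [← h_joint, Measure.map_apply hT hSm]; rfl
  -- null tie set
  have hE1 : π {p : (ℝ × ℝ) × (ℝ × ℝ) | p.1.1 = p.2.1} = 0 := by
    have hm : MeasurableSet {p : (ℝ × ℝ) × (ℝ × ℝ) | p.1.1 = p.2.1} :=
      measurableSet_eq_fun measurable_fst.fst measurable_snd.fst
    have hz : ∀ q : ℝ × ℝ, μ (Prod.mk q ⁻¹' {p : (ℝ × ℝ) × (ℝ × ℝ) | p.1.1 = p.2.1}) = 0 := by
      intro q
      have he : Prod.mk q ⁻¹' {p : (ℝ × ℝ) × (ℝ × ℝ) | p.1.1 = p.2.1}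
          = {r : ℝ × ℝ | r.1 = q.1} := by
        ext r; simp [eq_comm]
      rw [he, hμfst]
    rw [hπdef, Measure.prod_apply hm, lintegral_congr hz, lintegral_zero]
  have hE2 : π {p : (ℝ × ℝ) × (ℝ × ℝ) | p.1.2 = p.2.2} = 0 := by
    have hm : MeasurableSet {p : (ℝ × ℝ) × (ℝ × ℝ) | p.1.2 = p.2.2} :=
      measurableSet_eq_fun measurable_fst.snd measurable_snd.snd
    have hz : ∀ q : ℝ × ℝ, μ (Prod.mk q ⁻¹' {p : (ℝ × ℝ) × (ℝ × ℝ) | p.1.2 = p.2.2}) = 0 := by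
      intro q
      have he : Prod.mk q ⁻¹' {p : (ℝ × ℝ) × (ℝ × ℝ) | p.1.2 = p.2.2}
          = {r : ℝ × ℝ | r.2 = q.2} := by
        ext r; simp [eq_comm]
      rw [he, hμsnd]
    rw [hπdef, Measure.prod_apply hm, lintegral_congr hz, lintegral_zero]
  have hπ0 : π {p | v p = 0} = 0 := by
    refine measure_mono_null ?_ (measure_union_null hE1 hE2)
    intro p hp
    rcases mul_eq_zero.mp hp with h | h
    · exact Or.inl (sub_eq_zero.mp h)
    · exact Or.inr (sub_eq_zero.mp h)
  -- π S- = 1 - π S+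
  have hcompl : {p : (ℝ × ℝ) × (ℝ × ℝ) | v p < 0}
      = ({p | 0 < v p} ∪ {p | v p = 0})ᶜ := by
    ext p
    simp only [Set.mem_compl_iff, Set.mem_union, Set.mem_setOf_eq, not_or]
    constructor
    · intro h; exact ⟨asymm h, ne_of_lt h⟩
    · rintro ⟨h1, h2⟩
      rcases lt_trichotomy (v p) 0 with h | h | h
      · exact h
      · exact absurd h h2
      · exact absurd h h1
  have hπm : π {p | v p < 0} = 1 - π {p | 0 < v p} := by
    rw [hcompl, measure_compl (hSp.union hS0) (measure_ne_top _ _)]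
    congr 1
    · exact (measure_univ)
    · apply le_antisymm
      · calc π ({p | 0 < v p} ∪ {p | v p = 0}) ≤ π {p | 0 < v p} + π {p | v p = 0} :=
              measure_union_le _ _
          _ = π {p | 0 < v p} := by rw [hπ0, add_zero]
      · exact measure_mono Set.subset_union_left
  -- split S+ symmetrically
  set S₁ : Set ((ℝ × ℝ) × (ℝ × ℝ)) := {p | p.2.1 < p.1.1 ∧ p.2.2 < p.1.2} with hS₁def
  set S₂ : Set ((ℝ × ℝ) × (ℝ × ℝ)) := {p | p.1.1 < p.2.1 ∧ p.1.2 < p.2.2} with hS₂def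
  have hS₁m : MeasurableSet S₁ :=
    (measurableSet_lt measurable_snd.fst measurable_fst.fst).inter
      (measurableSet_lt measurable_snd.snd measurable_fst.snd)
  have hS₂m : MeasurableSet S₂ :=
    (measurableSet_lt measurable_fst.fst measurable_snd.fst).inter
      (measurableSet_lt measurable_fst.snd measurable_snd.snd)
  have hSpu : {p : (ℝ × ℝ) × (ℝ × ℝ) | 0 < v p} = S₁ ∪ S₂ := by
    ext p
    simp only [Set.mem_setOf_eq, Set.mem_union, hvdef, hS₁def, hS₂def]
    rw [mul_pos_iff]
    constructor
    · rintro (⟨h1, h2⟩ | ⟨h1, h2⟩)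
      · exact Or.inl ⟨sub_pos.mp h1, sub_pos.mp h2⟩
      · exact Or.inr ⟨sub_neg.mp h1, sub_neg.mp h2⟩
    · rintro (⟨h1, h2⟩ | ⟨h1, h2⟩)
      · exact Or.inl ⟨sub_pos.mpr h1, sub_pos.mpr h2⟩
      · exact Or.inr ⟨sub_neg.mpr h1, sub_neg.mpr h2⟩
  have hdisj : Disjoint S₁ S₂ := by
    rw [Set.disjoint_left]
    rintro p ⟨h1, _⟩ ⟨h1', _⟩
    exact absurd h1 (not_lt.mpr h1'.le)
  have hswap : π S₂ = π S₁ := by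
    have hpre : S₂ = Prod.swap ⁻¹' S₁ := by
      ext p; simp [hS₁def, hS₂def, Prod.swap]
    rw [hpre, ← Measure.map_apply measurable_swap hS₁m, hπdef, Measure.prod_swap]
  have hSpsum : π {p | 0 < v p} = π S₁ + π S₁ := by
    rw [hSpu, measure_union hdisj hS₂m, hswap]
  -- compute π S₁
  have hinner_le : ∀ a b : ℝ, μ {r : ℝ × ℝ | r.1 < a ∧ r.2 < b}
      = μ {r : ℝ × ℝ | r.1 ≤ a ∧ r.2 ≤ b} := by
    intro a b
    apply le_antisymm
    · exact measure_mono (fun r hr => ⟨hr.1.le, hr.2.le⟩)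
    · calc μ {r : ℝ × ℝ | r.1 ≤ a ∧ r.2 ≤ b}
          ≤ μ ({r : ℝ × ℝ | r.1 < a ∧ r.2 < b} ∪ ({r : ℝ × ℝ | r.1 = a} ∪ {r : ℝ × ℝ | r.2 = b})) := by
            apply measure_mono
            rintro r ⟨h1, h2⟩
            rcases eq_or_lt_of_le h1 with h | h
            · exact Or.inr (Or.inl h)
            rcases eq_or_lt_of_le h2 with h' | h'
            · exact Or.inr (Or.inr h')
            · exact Or.inl ⟨h, h'⟩
        _ ≤ μ {r : ℝ × ℝ | r.1 < a ∧ r.2 < b}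
            + μ ({r : ℝ × ℝ | r.1 = a} ∪ {r : ℝ × ℝ | r.2 = b}) := measure_union_le _ _
        _ = μ {r : ℝ × ℝ | r.1 < a ∧ r.2 < b} := by
            rw [measure_union_null (hμfst a) (hμsnd b), add_zero]
  have hμIic : ∀ a b : ℝ, μ {r : ℝ × ℝ | r.1 ≤ a ∧ r.2 ≤ b}
      = ENNReal.ofReal (C (F_X a) (F_Y b)) := by
    intro a b
    have hms : MeasurableSet {r : ℝ × ℝ | r.1 ≤ a ∧ r.2 ≤ b} :=
      (measurableSet_le measurable_fst measurable_const).inter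
        (measurableSet_le measurable_snd measurable_const)
    rw [hμdef, Measure.map_apply hXY hms]
    have : (fun ω => (X ω, Y ω)) ⁻¹' {r : ℝ × ℝ | r.1 ≤ a ∧ r.2 ≤ b}
        = {ω | X ω ≤ a ∧ Y ω ≤ b} := rfl
    rw [this, ← hSklar a b, ENNReal.ofReal_toReal (measure_ne_top P _)]
  have hπS₁ : π S₁ = ∫⁻ q, ENNReal.ofReal (C (F_X q.1) (F_Y q.2)) ∂μ := by
    rw [hπdef, Measure.prod_apply hS₁m]
    apply lintegral_congr
    intro q
    have : Prod.mk q ⁻¹' S₁ = {r : ℝ × ℝ | r.1 < q.1 ∧ r.2 < q.2} := rfl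
    rw [this, hinner_le, hμIic]
  -- measurability of the integrand
  set g : ℝ × ℝ → ℝ := fun q => C (F_X q.1) (F_Y q.2) with hgdef
  have hgeq : g = fun q : ℝ × ℝ => (μ {r : ℝ × ℝ | r.1 ≤ q.1 ∧ r.2 ≤ q.2}).toReal := by
    funext q
    rw [hgdef, hμIic, ENNReal.toReal_ofReal]
    rw [← hSklar]
    exact ENNReal.toReal_nonneg
  have hgnn : ∀ q, 0 ≤ g q := by
    intro q; rw [hgeq]; exact ENNReal.toReal_nonneg
  have hgm : Measurable g := by
    rw [hgeq]
    apply ENNReal.measurable_toReal.comp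
    have hS' : MeasurableSet {p : (ℝ × ℝ) × (ℝ × ℝ) | p.2.1 ≤ p.1.1 ∧ p.2.2 ≤ p.1.2} :=
      (measurableSet_le measurable_snd.fst measurable_fst.fst).inter
        (measurableSet_le measurable_snd.snd measurable_fst.snd)
    have key : (fun q : ℝ × ℝ => μ {r : ℝ × ℝ | r.1 ≤ q.1 ∧ r.2 ≤ q.2})
        = fun q : ℝ × ℝ => ∫⁻ r, Set.indicator
            {p : (ℝ × ℝ) × (ℝ × ℝ) | p.2.1 ≤ p.1.1 ∧ p.2.2 ≤ p.1.2}
            (fun _ => (1 : ENNReal)) (q, r) ∂μ := by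
      funext q
      have hpt : ∀ r : ℝ × ℝ, Set.indicator
          {p : (ℝ × ℝ) × (ℝ × ℝ) | p.2.1 ≤ p.1.1 ∧ p.2.2 ≤ p.1.2}
          (fun _ => (1 : ENNReal)) (q, r)
          = Set.indicator {r : ℝ × ℝ | r.1 ≤ q.1 ∧ r.2 ≤ q.2}
            (fun _ => (1 : ENNReal)) r := by
        intro r
        by_cases h : r.1 ≤ q.1 ∧ r.2 ≤ q.2 <;>
          simp [Set.indicator_apply, Set.mem_setOf_eq, h]
      simp_rw [hpt]
      exact (lintegral_indicator_one
        ((measurableSet_le measurable_fst measurable_const).inter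
          (measurableSet_le measurable_snd measurable_const))).symm
    rw [key]
    exact Measurable.lintegral_prod_right (measurable_const.indicator hS')
  -- convert π S₁ to the Bochner integral
  have hintg : ∫ q, g q ∂μ = (π S₁).toReal := by
    rw [integral_eq_lintegral_of_nonneg_ae (Filter.Eventually.of_forall hgnn)
      hgm.aestronglyMeasurable, hπS₁]
  have hintP : ∫ ω, C (F_X (X ω)) (F_Y (Y ω)) ∂P = ∫ q, g q ∂μ := by
    rw [hμdef, integral_map hXY.aemeasurable hgm.aestronglyMeasurable]
  -- final arithmetic
  have hle1 : π {p | 0 < v p} ≤ 1 := prob_le_one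
  have hfin : π S₁ ≠ ⊤ := measure_ne_top _ _
  rw [hPp, hPm, hπm, hintP, hintg,
    ENNReal.toReal_sub_of_le hle1 (by simp), hSpsum, ENNReal.toReal_add hfin hfin]
  simp only [ENNReal.toReal_one]
  ring
end
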